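/- Let X be a Hausdorff topological space. Suppose that for every proper lower semicontinuous function f : X → ℝ ∪ {+∞} bounded from below, every x₀ ∈ dom f, and every ε > 0, there exists a continuous bounded function h : X → ℝ₊ with h(x₀) = 0 and ‖h‖_∞ < f(x₀) − inf_X f + ε such that f + h attains its strong minimum on X at x₀. Then X is a completely regular topological space that satisfies the first axiom of countability (every point has a countable local base of neighbourhoods). -/
import Mathlib


open Filter Topology BoundedContinuousFunction

/-- `x₀` is a strong minimum of `g` on `X`: `g` attains its minimum on `X` uniquely
at `x₀`, and every minimizing sequence converges to `x₀`. -/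
def StrongMinAt {X : Type*} [TopologicalSpace X] (g : X → EReal) (x₀ : X) : Prop :=
  (∀ x, g x₀ ≤ g x) ∧ (∀ x, g x = g x₀ → x = x₀) ∧
  ∀ u : ℕ → X, Tendsto (fun n => g (u n)) atTop (𝓝 (⨅ x, g x)) →
    Tendsto u atTop (𝓝 x₀)

private lemma key_lemma {X : Type*} [TopologicalSpace X] (h : X →ᵇ ℝ) (x₀ : X)
    (hnn : ∀ x, 0 ≤ h x) (hx0 : h x₀ = 0)
    (hsm : StrongMinAt (fun x => ((h x : ℝ) : EReal)) x₀) :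
    ∀ A : Set X, IsClosed A → x₀ ∉ A → ∃ δ : ℝ, 0 < δ ∧ ∀ x ∈ A, δ ≤ h x := by
  intro A hA hxA
  by_contra hc
  push_neg at hc
  have hsel : ∀ n : ℕ, ∃ x, x ∈ A ∧ h x < 1 / ((n : ℝ) + 1) := by
    intro n
    obtain ⟨x, hxA', hx⟩ := hc (1 / ((n : ℝ) + 1)) (by positivity)
    exact ⟨x, hxA', hx⟩
  choose u huA hu using hsel
  have hinf : (⨅ x, ((h x : ℝ) : EReal)) = 0 := by
    apply le_antisymm
    · simpa [hx0] using iInf_le (fun x => ((h x : ℝ) : EReal)) x₀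
    · exact le_iInf fun x => by exact_mod_cast hnn x
  have htend : Tendsto (fun n => (h (u n) : ℝ)) atTop (𝓝 0) := by
    apply squeeze_zero (fun n => hnn (u n)) (fun n => (hu n).le)
    exact tendsto_one_div_add_atTop_nhds_zero_nat
  have htend' : Tendsto (fun n => ((h (u n) : ℝ) : EReal)) atTop
      (𝓝 (⨅ x, ((h x : ℝ) : EReal))) := by
    rw [hinf]
    have := EReal.tendsto_coe.2 htend
    simpa using this
  have hconv := hsm.2.2 u htend'
  exact hxA (hA.mem_of_tendsto hconv (Eventually.of_forall huA))

/-- **Theorem 2.4.**  If in a Hausdorff space `X` the strong variational principle of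
Kenderov–Revalski holds for every proper lower semicontinuous function bounded from
below, then `X` is a completely regular space satisfying the first axiom of
countability. -/
theorem completelyRegular_and_firstCountable_of_strong_variational_principle
    {X : Type*} [TopologicalSpace X] [T2Space X]
    (H : ∀ f : X → EReal, (∀ x, f x ≠ ⊥) → LowerSemicontinuous f →
      (∃ m : ℝ, ∀ x, (m : EReal) ≤ f x) → (∃ x, f x ≠ ⊤) →
      ∀ x₀ : X, f x₀ ≠ ⊤ → ∀ ε : ℝ, 0 < ε →
        ∃ h : X →ᵇ ℝ, (∀ x, 0 ≤ h x) ∧ h x₀ = 0 ∧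
          ((‖h‖ : ℝ) : EReal) < f x₀ - (⨅ x, f x) + (ε : EReal) ∧
          StrongMinAt (fun x => f x + (h x : EReal)) x₀) :
    CompletelyRegularSpace X ∧ FirstCountableTopology X := by
  have main : ∀ x₀ : X, ∃ h : X →ᵇ ℝ, (∀ x, 0 ≤ h x) ∧ h x₀ = 0 ∧
      StrongMinAt (fun x => ((h x : ℝ) : EReal)) x₀ := by
    intro x₀
    obtain ⟨h, hnn, hx0, -, hsm⟩ := H (fun _ => (0 : EReal)) (fun _ => by simp)
      lowerSemicontinuous_const ⟨0, fun _ => by norm_num⟩ ⟨x₀, by simp⟩ x₀ (by simp) 1 one_pos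
    refine ⟨h, hnn, hx0, ?_⟩
    have heq : (fun x => (fun _ : X => (0 : EReal)) x + ((h x : ℝ) : EReal)) =
        fun x => ((h x : ℝ) : EReal) := by
      funext x; exact zero_add _
    rwa [heq] at hsm
  constructor
  · constructor
    intro x K hK hxK
    obtain ⟨h, hnn, hx0, hsm⟩ := main x
    obtain ⟨δ, hδ, hδK⟩ := key_lemma h x hnn hx0 hsm K hK hxK
    refine ⟨fun y => Set.projIcc 0 1 zero_le_one (h y / δ), ?_, ?_, ?_⟩
    · exact continuous_projIcc.comp (h.continuous.div_const δ)
    · apply Subtype.ext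
      simp [Set.coe_projIcc, hx0]
    · intro y hy
      have h1 : (1 : ℝ) ≤ h y / δ := (one_le_div hδ).2 (hδK y hy)
      apply Subtype.ext
      simp [Set.coe_projIcc, h1, min_eq_left h1, max_eq_right]
  · constructor
    intro x₀
    obtain ⟨h, hnn, hx0, hsm⟩ := main x₀
    have hb : (𝓝 x₀).HasBasis (fun _ : ℕ => True)
        (fun n => {x | h x < 1 / ((n : ℝ) + 1)}) := by
      constructor
      intro U
      simp only [true_and]
      constructor
      · intro hU
        have hxint : x₀ ∈ interior U := mem_interior_iff_mem_nhds.2 hU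
        obtain ⟨δ, hδ, hδK⟩ := key_lemma h x₀ hnn hx0 hsm (interior U)ᶜ
          isOpen_interior.isClosed_compl (by simpa)
        obtain ⟨n, hn⟩ := exists_nat_one_div_lt hδ
        refine ⟨n, fun y hy => ?_⟩
        have hyU : y ∈ interior U := by
          by_contra hy'
          exact absurd (hδK y hy') (not_le.2 (lt_trans hy hn))
        exact interior_subset hyU
      · rintro ⟨n, hn⟩
        apply mem_of_superset _ hn
        have hop : IsOpen {x | h x < 1 / ((n : ℝ) + 1)} :=
          isOpen_lt h.continuous continuous_const
        apply hop.mem_nhds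
        simp only [Set.mem_setOf_eq, hx0]
        positivity
    exact hb.isCountablyGenerated
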